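/- arXiv:1306.0409 — 2 statements merged into one kernel-verified Lean document; each statement's English description precedes it below -/
import Mathlib

section
/- Let T be a 2×2 unitary matrix with overlap c = max_{k,l=1,2} |T_{lk}|, and let α, β ∈ [0, 1/2] with λ = max(α, β). Then for every unit vector ψ ∈ ℂ², H_α(|ψ|²) + H_β(|Tψ|²) ≥ (1/(1−λ))·log( c^{2λ} + (1−c²)^λ ), and this bound is tight: there exists a unit vector ψ attaining equality. -/
open Real

/-- Power with the convention `0 ^ λ = 0` for all `λ ≥ 0`. -/
noncomputable def pw (p lam : ℝ) : ℝ := if p = 0 then 0 else p ^ lam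

/-- Rényi entropy of the two-point probability vector `(p₁, p₂)`:
`H_λ(p) = (1/(1-λ)) log (p₁^λ + p₂^λ)` for `λ ≠ 1`, Shannon entropy for `λ = 1`. -/
noncomputable def Hren (lam p1 p2 : ℝ) : ℝ :=
  if lam = 1 then -(p1 * Real.log p1 + p2 * Real.log p2)
  else (1 - lam)⁻¹ * Real.log (pw p1 lam + pw p2 lam)

lemma pw_eq {lam : ℝ} (h : lam ≠ 0) (p : ℝ) : pw p lam = p ^ lam := by
  unfold pw
  split
  · rename_i hp; rw [hp, Real.zero_rpow h]
  · rfl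

lemma rpow_subadd {x y p : ℝ} (hx : 0 ≤ x) (hy : 0 ≤ y) (hp : 0 ≤ p) (hp1 : p ≤ 1) :
    (x+y)^p ≤ x^p + y^p := by
  have h := NNReal.rpow_add_le_add_rpow x.toNNReal y.toNNReal hp hp1
  have h2 := NNReal.coe_le_coe.2 h
  push_cast at h2
  rwa [Real.coe_toNNReal x hx, Real.coe_toNNReal y hy] at h2

lemma concave_comb {lam t x y : ℝ} (hl0 : 0 ≤ lam) (hl1 : lam ≤ 1) (hx : 0 ≤ x) (hy : 0 ≤ y)
    (ht0 : 0 ≤ t) (ht1 : t ≤ 1) :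
    t * x^lam + (1-t) * y^lam ≤ (t*x + (1-t)*y)^lam := by
  have h := (Real.concaveOn_rpow hl0 hl1).2 (Set.mem_Ici.2 hx) (Set.mem_Ici.2 hy)
    ht0 (sub_nonneg.2 ht1) (by ring : t + (1 - t) = 1)
  simpa [smul_eq_mul] using h

lemma f_anti {lam p p' : ℝ} (hl0 : 0 ≤ lam) (hl1 : lam ≤ 1) (hp : 1/2 ≤ p) (hpp : p ≤ p')
    (hp1 : p' ≤ 1) : p'^lam + (1-p')^lam ≤ p^lam + (1-p)^lam := by
  rcases eq_or_lt_of_le hpp with rfl|h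
  · exact le_refl _
  have h2 : (1:ℝ)/2 < p' := lt_of_le_of_lt hp h
  have hd : (0:ℝ) < 2*p' - 1 := by linarith
  have hd' : 2*p' - 1 ≠ 0 := ne_of_gt hd
  set t := (p - (1-p'))/(2*p'-1) with ht
  have ht0 : 0 ≤ t := div_nonneg (by linarith) (by linarith)
  have ht1 : t ≤ 1 := (div_le_one hd).2 (by linarith)
  have e1 : t*p' + (1-t)*(1-p') = p := by have hm : t*(2*p'-1) = p-(1-p') := div_mul_cancel₀ _ hd'; linear_combination hm
  have e2 : t*(1-p') + (1-t)*p' = 1-p := by have hm : t*(2*p'-1) = p-(1-p') := div_mul_cancel₀ _ hd'; linear_combination -hm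
  have c1 := concave_comb hl0 hl1 (by linarith : (0:ℝ) ≤ p') (by linarith : (0:ℝ) ≤ 1-p') ht0 ht1
  have c2 := concave_comb hl0 hl1 (by linarith : (0:ℝ) ≤ 1-p') (by linarith : (0:ℝ) ≤ p') ht0 ht1
  rw [e1] at c1
  rw [e2] at c2
  nlinarith [c1, c2]

lemma sq_rpow {x lam : ℝ} (hx : 0 ≤ x) : (x^2)^lam = x^(2*lam) := by
  rw [← Real.rpow_natCast_mul hx 2 lam]; norm_num

noncomputable def gg (lam t : ℝ) : ℝ := (Real.cos t ^ 2) ^ lam + (Real.sin t ^ 2) ^ lam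

lemma gg_nonneg (lam t : ℝ) : 0 ≤ gg lam t :=
  add_nonneg (Real.rpow_nonneg (sq_nonneg _) _) (Real.rpow_nonneg (sq_nonneg _) _)

lemma g_superadd {lam θ φ : ℝ} (hl0 : 0 ≤ lam) (hl1 : lam ≤ 1/2)
    (hθ0 : 0 ≤ θ) (hφ0 : 0 ≤ φ) (hsum : θ + φ ≤ π/2) :
    gg lam (θ+φ) ≤ gg lam θ * gg lam φ := by
  have hpi : 0 < π := Real.pi_pos
  have hcθ : 0 ≤ Real.cos θ := Real.cos_nonneg_of_mem_Icc ⟨by linarith, by linarith⟩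
  have hcφ : 0 ≤ Real.cos φ := Real.cos_nonneg_of_mem_Icc ⟨by linarith, by linarith⟩
  have hsθ : 0 ≤ Real.sin θ := Real.sin_nonneg_of_nonneg_of_le_pi hθ0 (by linarith)
  have hsφ : 0 ≤ Real.sin φ := Real.sin_nonneg_of_nonneg_of_le_pi hφ0 (by linarith)
  have hc : 0 ≤ Real.cos (θ+φ) := Real.cos_nonneg_of_mem_Icc ⟨by linarith, by linarith⟩
  have h1 : Real.cos (θ+φ) ^ 2 ≤ (Real.cos θ * Real.cos φ) ^ 2 := by
    have := Real.cos_add θ φ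
    nlinarith [mul_nonneg hsθ hsφ, mul_nonneg hcθ hcφ]
  have h1' : (Real.cos (θ+φ) ^ 2) ^ lam ≤ ((Real.cos θ * Real.cos φ) ^ 2) ^ lam :=
    Real.rpow_le_rpow (sq_nonneg _) h1 hl0
  have e : Real.sin (θ+φ) = Real.sin θ * Real.cos φ + Real.cos θ * Real.sin φ :=
    Real.sin_add θ φ
  have h2 : (Real.sin (θ+φ) ^ 2) ^ lam
      ≤ ((Real.sin θ * Real.cos φ) ^ 2) ^ lam + ((Real.cos θ * Real.sin φ) ^ 2) ^ lam := by
    rw [sq_rpow (by nlinarith : (0:ℝ) ≤ Real.sin (θ+φ)),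
      sq_rpow (mul_nonneg hsθ hcφ), sq_rpow (mul_nonneg hcθ hsφ), e]
    exact rpow_subadd (mul_nonneg hsθ hcφ) (mul_nonneg hcθ hsφ) (by linarith) (by linarith)
  have h3 : ((Real.cos θ * Real.cos φ) ^ 2) ^ lam
      = (Real.cos θ ^ 2) ^ lam * (Real.cos φ ^ 2) ^ lam := by
    rw [mul_pow]; exact Real.mul_rpow (sq_nonneg _) (sq_nonneg _)
  have h4 : ((Real.sin θ * Real.cos φ) ^ 2) ^ lam
      = (Real.sin θ ^ 2) ^ lam * (Real.cos φ ^ 2) ^ lam := by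
    rw [mul_pow]; exact Real.mul_rpow (sq_nonneg _) (sq_nonneg _)
  have h5 : ((Real.cos θ * Real.sin φ) ^ 2) ^ lam
      = (Real.cos θ ^ 2) ^ lam * (Real.sin φ ^ 2) ^ lam := by
    rw [mul_pow]; exact Real.mul_rpow (sq_nonneg _) (sq_nonneg _)
  have hpos : 0 ≤ (Real.sin θ ^ 2) ^ lam * (Real.sin φ ^ 2) ^ lam :=
    mul_nonneg (Real.rpow_nonneg (sq_nonneg _) _) (Real.rpow_nonneg (sq_nonneg _) _)
  unfold gg
  nlinarith [h1', h2, h3, h4, h5, hpos]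

lemma g_mono {lam s t : ℝ} (hl0 : 0 ≤ lam) (hl1 : lam ≤ 1/2)
    (hs0 : 0 ≤ s) (hst : s ≤ t) (ht : t ≤ π/4) : gg lam s ≤ gg lam t := by
  have hpi : 0 < π := Real.pi_pos
  have h4 : π/4 ≤ π := by linarith
  have hct : 0 ≤ Real.cos t := Real.cos_nonneg_of_mem_Icc ⟨by linarith, by linarith⟩
  have hcs : Real.cos t ≤ Real.cos s := by
    apply Real.cos_le_cos_of_nonneg_of_le_pi hs0 (by linarith) hst
  have hcs1 : Real.cos s ≤ 1 := Real.cos_le_one s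
  have hsq : Real.cos t ^ 2 ≤ Real.cos s ^ 2 := by nlinarith
  have hhalf : 1/2 ≤ Real.cos t ^ 2 := by
    have := Real.cos_le_cos_of_nonneg_of_le_pi (le_trans hs0 hst) h4 ht
    rw [Real.cos_pi_div_four] at this
    nlinarith [Real.sq_sqrt (by norm_num : (0:ℝ) ≤ 2), Real.sqrt_nonneg 2]
  have h := f_anti hl0 (by linarith) hhalf hsq (by nlinarith)
  unfold gg
  rw [Real.sin_sq s, Real.sin_sq t]
  exact h

lemma gg_arccos {lam x : ℝ} (hx0 : 0 ≤ x) (hx1 : x ≤ 1) :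
    gg lam (Real.arccos x) = (x^2)^lam + (1-x^2)^lam := by
  unfold gg
  rw [Real.cos_arccos (by linarith) hx1, Real.sin_arccos,
    Real.sq_sqrt (by nlinarith : (0:ℝ) ≤ 1 - x^2)]

lemma core {lam a v b w c : ℝ} (hl0 : 0 ≤ lam) (hl : lam ≤ 1/2)
    (ha0 : 0 ≤ a) (hv0 : 0 ≤ v) (hb0 : 0 ≤ b) (hw0 : 0 ≤ w) (hc0 : 0 ≤ c)
    (hav : a^2 + v^2 = 1) (hbw : b^2 + w^2 = 1)
    (ha : 1/2 ≤ a^2) (hb : 1/2 ≤ b^2) (hc : 1/2 ≤ c^2) (hc1 : c ≤ 1)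
    (hLP : a*b ≤ c + v*w) :
    (c^2)^lam + (1-c^2)^lam ≤ ((a^2)^lam + (v^2)^lam) * ((b^2)^lam + (w^2)^lam) := by
  have ha1 : a ≤ 1 := by nlinarith
  have hb1 : b ≤ 1 := by nlinarith
  have hpi : 0 < π := Real.pi_pos
  have hroot : ∀ x : ℝ, 0 ≤ x → 1/2 ≤ x^2 → Real.sqrt 2 / 2 ≤ x := by
    intro x hx h
    nlinarith [Real.sqrt_nonneg 2, Real.sq_sqrt (by norm_num : (0:ℝ) ≤ 2)]
  set θ := Real.arccos a with hθdef
  set φ := Real.arccos b with hφdef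
  set γ := Real.arccos c with hγdef
  have hθ4 : θ ≤ π/4 := Real.arccos_le_pi_div_four.2 (hroot a ha0 ha)
  have hφ4 : φ ≤ π/4 := Real.arccos_le_pi_div_four.2 (hroot b hb0 hb)
  have hγ4 : γ ≤ π/4 := Real.arccos_le_pi_div_four.2 (hroot c hc0 hc)
  have hθ0 : 0 ≤ θ := Real.arccos_nonneg a
  have hφ0 : 0 ≤ φ := Real.arccos_nonneg b
  have hγ0 : 0 ≤ γ := Real.arccos_nonneg c
  have hcosθ : Real.cos θ = a := Real.cos_arccos (by linarith) ha1
  have hcosφ : Real.cos φ = b := Real.cos_arccos (by linarith) hb1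
  have hcosγ : Real.cos γ = c := Real.cos_arccos (by linarith) hc1
  have hsinθ : Real.sin θ = v := by
    rw [hθdef, Real.sin_arccos]
    rw [show 1 - a^2 = v^2 by linarith, Real.sqrt_sq hv0]
  have hsinφ : Real.sin φ = w := by
    rw [hφdef, Real.sin_arccos]
    rw [show 1 - b^2 = w^2 by linarith, Real.sqrt_sq hw0]
  have hγsum : γ ≤ θ + φ := by
    by_contra hcon
    push_neg at hcon
    have h1 : Real.cos γ < Real.cos (θ + φ) := by
      apply Real.strictAntiOn_cos ⟨by linarith, by linarith⟩ ⟨hγ0, by linarith⟩ hcon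
    rw [Real.cos_add, hcosθ, hcosφ, hsinθ, hsinφ, hcosγ] at h1
    linarith
  set θ' := min θ γ with hθ'
  set φ' := γ - θ' with hφ'
  have hθ'0 : 0 ≤ θ' := le_min hθ0 hγ0
  have hθ'γ : θ' ≤ γ := min_le_right _ _
  have hφ'0 : 0 ≤ φ' := by rw [hφ']; linarith
  have hθ'θ : θ' ≤ θ := min_le_left _ _
  have hφ'φ : φ' ≤ φ := by
    rcases le_total θ γ with h|h
    · have : θ' = θ := min_eq_left h
      rw [hφ', this]; linarith
    · have : θ' = γ := min_eq_right h
      rw [hφ', this]; linarith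
  have hchain : gg lam γ ≤ gg lam θ * gg lam φ := by
    have e : γ = θ' + φ' := by rw [hφ']; ring
    calc gg lam γ = gg lam (θ' + φ') := by rw [← e]
      _ ≤ gg lam θ' * gg lam φ' := g_superadd hl0 hl hθ'0 hφ'0 (by rw [← e]; linarith)
      _ ≤ gg lam θ * gg lam φ := by
          apply mul_le_mul (g_mono hl0 hl hθ'0 hθ'θ hθ4) (g_mono hl0 hl hφ'0 hφ'φ hφ4)
            (gg_nonneg _ _) (gg_nonneg _ _)
  have e1 : gg lam γ = (c^2)^lam + (1-c^2)^lam := gg_arccos hc0 hc1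
  have e2 : gg lam θ = (a^2)^lam + (v^2)^lam := by
    unfold gg; rw [hcosθ, hsinθ]
  have e3 : gg lam φ = (b^2)^lam + (w^2)^lam := by
    unfold gg; rw [hcosφ, hsinφ]
  rw [← e1, ← e2, ← e3]
  exact hchain

lemma lp_alg {a v b w d e c : ℝ} (ha : 0 ≤ a) (hv : 0 ≤ v) (hb : 0 ≤ b) (hw : 0 ≤ w)
    (hd : 0 ≤ d) (he : 0 ≤ e) (hav : a^2 + v^2 = 1) (hde : d^2 + e^2 = 1)
    (hbw : b^2 + w^2 = 1) (htri : b ≤ d*a + e*v) (hdc : d ≤ c) :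
    a*b ≤ c + v*w := by
  have h1 : (a*e - v*d)^2 ≤ w^2 := by nlinarith
  have h2 : a*e - v*d ≤ w := by nlinarith
  nlinarith [mul_le_mul_of_nonneg_left htri ha, mul_le_mul_of_nonneg_left h2 hv]

lemma case_core {lam a v b w d e c : ℝ} (hl0 : 0 ≤ lam) (hl : lam ≤ 1/2)
    (ha0 : 0 ≤ a) (hv0 : 0 ≤ v) (hb0 : 0 ≤ b) (hw0 : 0 ≤ w) (hd0 : 0 ≤ d) (he0 : 0 ≤ e)
    (hc0 : 0 ≤ c) (hc1 : c ≤ 1) (hc2 : 1/2 ≤ c^2)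
    (hav : a^2 + v^2 = 1) (hbw : b^2 + w^2 = 1) (hde : d^2 + e^2 = 1)
    (hva : v ≤ a) (hwb : w ≤ b) (htri : b ≤ d*a + e*v) (hdc : d ≤ c) :
    (c^2)^lam + (1-c^2)^lam ≤ ((a^2)^lam + (v^2)^lam) * ((b^2)^lam + (w^2)^lam) := by
  have ha : 1/2 ≤ a^2 := by nlinarith
  have hb : 1/2 ≤ b^2 := by nlinarith
  exact core hl0 hl ha0 hv0 hb0 hw0 hc0 hav hbw ha hb hc2 hc1
    (lp_alg ha0 hv0 hb0 hw0 hd0 he0 hav hde hbw htri hdc)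

lemma index_mono {α lam p1 p2 : ℝ} (hα0 : 0 ≤ α) (halam : α ≤ lam) (hlam2 : lam ≤ 1/2)
    (hl0 : 0 < lam) (hp1 : 0 ≤ p1) (hp2 : 0 ≤ p2) (hsum : p1 + p2 = 1) :
    (1 - lam)⁻¹ * Real.log (p1 ^ lam + p2 ^ lam) ≤ Hren α p1 p2 := by
  have hα1 : α ≠ 1 := by intro h; rw [h] at halam; linarith
  rw [Hren, if_neg hα1]
  rcases eq_or_lt_of_le hp1 with h1|h1
  · have : p2 = 1 := by linarith
    rw [← h1, this, pw, pw, if_pos rfl, if_neg one_ne_zero,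
      Real.zero_rpow (ne_of_gt hl0), Real.one_rpow, Real.one_rpow]
    simp
  rcases eq_or_lt_of_le hp2 with h2|h2
  · have : p1 = 1 := by linarith
    rw [← h2, this, pw, pw, if_pos rfl, if_neg one_ne_zero,
      Real.zero_rpow (ne_of_gt hl0), Real.one_rpow, Real.one_rpow]
    simp
  rw [pw, pw, if_neg (ne_of_gt h1), if_neg (ne_of_gt h2)]
  set s := (1 - lam)/(1 - α) with hs
  have hα2 : α < 1 := by linarith
  have hden : (0:ℝ) < 1 - α := by linarith
  have hs0 : 0 < s := div_pos (by linarith) hden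
  have hs1 : s ≤ 1 := by rw [hs, div_le_one hden]; linarith
  have hlam1 : (0:ℝ) < 1 - lam := by linarith
  have exp_e : (α - 1) * s = lam - 1 := by rw [hs]; field_simp; ring
  have split : ∀ q : ℝ, 0 < q → q ^ lam = q * (q ^ (α - 1)) ^ s := by
    intro q hq
    rw [← Real.rpow_mul (le_of_lt hq), exp_e]
    calc q ^ (lam : ℝ) = q ^ ((1:ℝ) + (lam - 1)) := by norm_num
      _ = q ^ (1:ℝ) * q ^ (lam - 1) := Real.rpow_add hq 1 (lam-1)
      _ = q * q ^ (lam - 1) := by rw [Real.rpow_one]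
  have splitα : ∀ q : ℝ, 0 < q → q ^ α = q * q ^ (α - 1) := by
    intro q hq
    calc q ^ (α : ℝ) = q ^ ((1:ℝ) + (α - 1)) := by norm_num
      _ = q ^ (1:ℝ) * q ^ (α - 1) := Real.rpow_add hq 1 (α-1)
      _ = q * q ^ (α - 1) := by rw [Real.rpow_one]
  have hp2e : (1:ℝ) - p1 = p2 := by linarith
  have key : p1 ^ lam + p2 ^ lam ≤ (p1 ^ α + p2 ^ α) ^ s := by
    have cc := concave_comb (le_of_lt hs0) hs1
      (Real.rpow_nonneg (le_of_lt h1) (α-1)) (Real.rpow_nonneg (le_of_lt h2) (α-1))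
      (le_of_lt h1) (by linarith : p1 ≤ 1)
    rw [hp2e] at cc
    rw [split p1 h1, split p2 h2, splitα p1 h1, splitα p2 h2]
    exact cc
  have hXpos : 0 < p1 ^ α + p2 ^ α :=
    add_pos (Real.rpow_pos_of_pos h1 α) (Real.rpow_pos_of_pos h2 α)
  have hLpos : 0 < p1 ^ lam + p2 ^ lam :=
    add_pos (Real.rpow_pos_of_pos h1 lam) (Real.rpow_pos_of_pos h2 lam)
  have hlog : Real.log (p1 ^ lam + p2 ^ lam) ≤ s * Real.log (p1 ^ α + p2 ^ α) := by
    calc Real.log (p1 ^ lam + p2 ^ lam) ≤ Real.log ((p1 ^ α + p2 ^ α) ^ s) :=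
          Real.log_le_log hLpos key
      _ = s * Real.log (p1 ^ α + p2 ^ α) := Real.log_rpow hXpos s
  have step := mul_le_mul_of_nonneg_left hlog (le_of_lt (inv_pos.2 hlam1))
  have coefe : (1 - lam)⁻¹ * (s * Real.log (p1 ^ α + p2 ^ α))
      = (1 - α)⁻¹ * Real.log (p1 ^ α + p2 ^ α) := by
    rw [hs]; field_simp
  linarith [step, coefe ▸ step]

lemma row_norm (T : Matrix (Fin 2) (Fin 2) ℂ) (hT : T ∈ Matrix.unitaryGroup (Fin 2) ℂ) :
    ∀ j : Fin 2, ‖T j 0‖^2 + ‖T j 1‖^2 = 1 := by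
  intro j
  have h := congrArg (fun M => (M j j).re) hT.2
  simp [Matrix.mul_apply, Fin.sum_univ_two, Matrix.one_apply, Matrix.star_apply,
    Complex.mul_conj, Complex.sq_norm, Complex.normSq_apply] at h
  simp [Complex.sq_norm, Complex.normSq_apply]
  linarith [h]

lemma col_norm (T : Matrix (Fin 2) (Fin 2) ℂ) (hT : T ∈ Matrix.unitaryGroup (Fin 2) ℂ) :
    ∀ j : Fin 2, ‖T 0 j‖^2 + ‖T 1 j‖^2 = 1 := by
  intro j
  have h := congrArg (fun M => (M j j).re) hT.1
  simp [Matrix.mul_apply, Fin.sum_univ_two, Matrix.one_apply, Matrix.star_apply,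
    Complex.mul_conj, Complex.sq_norm, Complex.normSq_apply] at h
  simp [Complex.sq_norm, Complex.normSq_apply]
  linarith [h]

lemma mulVec_apply (T : Matrix (Fin 2) (Fin 2) ℂ) (ψ : Fin 2 → ℂ) :
    ∀ j, T.mulVec ψ j = T j 0 * ψ 0 + T j 1 * ψ 1 := by
  intro j; simp [Matrix.mulVec, dotProduct, Fin.sum_univ_two]

lemma norm_pres (T : Matrix (Fin 2) (Fin 2) ℂ) (hT : T ∈ Matrix.unitaryGroup (Fin 2) ℂ)
    (ψ : Fin 2 → ℂ) (hψ : ‖ψ 0‖ ^ 2 + ‖ψ 1‖ ^ 2 = 1) :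
    ‖T.mulVec ψ 0‖ ^ 2 + ‖T.mulVec ψ 1‖ ^ 2 = 1 := by
  have hv := mulVec_apply T ψ
  have h00 := congrArg (fun M => M 0 0) hT.1
  have h01 := congrArg (fun M => M 0 1) hT.1
  have h10 := congrArg (fun M => M 1 0) hT.1
  have h11 := congrArg (fun M => M 1 1) hT.1
  simp only [Matrix.mul_apply, Fin.sum_univ_two, Matrix.one_apply, Matrix.star_apply,
    Fin.isValue, ne_eq, zero_ne_one, not_false_eq_true, if_true, if_false,
    Complex.star_def, reduceIte, one_ne_zero] at h00 h01 h10 h11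
  have habs : ∀ z : ℂ, ((‖z‖ ^ 2 : ℝ) : ℂ) = z * (starRingEnd ℂ) z := by
    intro z; rw [Complex.sq_norm, Complex.mul_conj]
  have key : ((‖T.mulVec ψ 0‖ ^ 2 + ‖T.mulVec ψ 1‖ ^ 2 : ℝ) : ℂ)
      = ((‖ψ 0‖ ^ 2 + ‖ψ 1‖ ^ 2 : ℝ) : ℂ) := by
    rw [Complex.ofReal_add, Complex.ofReal_add, habs, habs, habs, habs, hv 0, hv 1]
    simp only [map_add, map_mul]
    linear_combination (ψ 0 * (starRingEnd ℂ) (ψ 0)) * h00 + (ψ 1 * (starRingEnd ℂ) (ψ 1)) * h11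
      + (ψ 1 * (starRingEnd ℂ) (ψ 0)) * h01 + (ψ 0 * (starRingEnd ℂ) (ψ 1)) * h10
  have key2 : ‖T.mulVec ψ 0‖ ^ 2 + ‖T.mulVec ψ 1‖ ^ 2
      = ‖ψ 0‖ ^ 2 + ‖ψ 1‖ ^ 2 := by exact_mod_cast key
  rw [key2, hψ]

lemma c_facts (T : Matrix (Fin 2) (Fin 2) ℂ) (hT : T ∈ Matrix.unitaryGroup (Fin 2) ℂ)
    (c : ℝ) (hc : IsGreatest {x : ℝ | ∃ k l : Fin 2, x = ‖T l k‖} c) :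
    0 ≤ c ∧ c ≤ 1 ∧ 1/2 ≤ c^2 := by
  obtain ⟨⟨k0, l0, hckl⟩, hub⟩ := hc
  have hle : ∀ k l : Fin 2, ‖T l k‖ ≤ c := fun k l => hub ⟨k, l, rfl⟩
  have h0 : 0 ≤ c := by rw [hckl]; positivity
  have hrow := row_norm T hT l0
  have h1 : c ≤ 1 := by
    have hk : k0 = 0 ∨ k0 = 1 := by fin_cases k0 <;> simp
    rcases hk with rfl|rfl <;>
      nlinarith [hckl, hrow, norm_nonneg (T l0 0), norm_nonneg (T l0 1)]
  have hcol := col_norm T hT 0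
  have h2 : 1/2 ≤ c^2 := by
    nlinarith [hle 0 0, hle 0 1, norm_nonneg (T 0 0), norm_nonneg (T 1 0)]
  exact ⟨h0, h1, h2⟩


lemma prod_bound (T : Matrix (Fin 2) (Fin 2) ℂ) (hT : T ∈ Matrix.unitaryGroup (Fin 2) ℂ)
    (c : ℝ) (hc : IsGreatest {x : ℝ | ∃ k l : Fin 2, x = ‖T l k‖} c)
    (lam : ℝ) (hl0 : 0 ≤ lam) (hl : lam ≤ 1/2)
    (ψ : Fin 2 → ℂ) (hψ : ‖ψ 0‖ ^ 2 + ‖ψ 1‖ ^ 2 = 1) :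
    (c^2)^lam + (1-c^2)^lam ≤
      ((‖ψ 0‖ ^ 2)^lam + (‖ψ 1‖ ^ 2)^lam) *
      ((‖T.mulVec ψ 0‖ ^ 2)^lam + (‖T.mulVec ψ 1‖ ^ 2)^lam) := by
  obtain ⟨hc0, hc1, hc2⟩ := c_facts T hT c hc
  have hle : ∀ k l : Fin 2, ‖T l k‖ ≤ c := fun k l => hc.2 ⟨k, l, rfl⟩
  have hQ := norm_pres T hT ψ hψ
  have htri : ∀ j, ‖T.mulVec ψ j‖
      ≤ ‖T j 0‖ * ‖ψ 0‖ + ‖T j 1‖ * ‖ψ 1‖ := by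
    intro j
    rw [mulVec_apply]
    calc ‖T j 0 * ψ 0 + T j 1 * ψ 1‖
        ≤ ‖T j 0 * ψ 0‖ + ‖T j 1 * ψ 1‖ := norm_add_le _ _
      _ = _ := by rw [norm_mul, norm_mul]
  have hr0 := row_norm T hT 0
  have hr1 := row_norm T hT 1
  have n0 : 0 ≤ ‖ψ 0‖ := norm_nonneg _
  have n1 : 0 ≤ ‖ψ 1‖ := norm_nonneg _
  have m0 : 0 ≤ ‖T.mulVec ψ 0‖ := norm_nonneg _
  have m1 : 0 ≤ ‖T.mulVec ψ 1‖ := norm_nonneg _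
  have t00 : 0 ≤ ‖T 0 0‖ := norm_nonneg _
  have t01 : 0 ≤ ‖T 0 1‖ := norm_nonneg _
  have t10 : 0 ≤ ‖T 1 0‖ := norm_nonneg _
  have t11 : 0 ≤ ‖T 1 1‖ := norm_nonneg _
  rcases le_total (‖ψ 1‖) (‖ψ 0‖) with hP|hP <;>
    rcases le_total (‖T.mulVec ψ 1‖) (‖T.mulVec ψ 0‖) with hW|hW
  · exact case_core hl0 hl n0 n1 m0 m1 t00 t01 hc0 hc1 hc2 hψ hQ hr0 hP hW (htri 0) (hle 0 0)
  · exact le_trans (case_core hl0 hl n0 n1 m1 m0 t10 t11 hc0 hc1 hc2 hψ (by linarith)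
      hr1 hP hW (htri 1) (hle 0 1)) (le_of_eq (by ring))
  · exact le_trans (case_core hl0 hl n1 n0 m0 m1 t01 t00 hc0 hc1 hc2 (by linarith) hQ
      (by linarith) hP hW (by linarith [htri 0]) (hle 1 0)) (le_of_eq (by ring))
  · exact le_trans (case_core hl0 hl n1 n0 m1 m0 t11 t10 hc0 hc1 hc2 (by linarith)
      (by linarith) (by linarith) hP hW (by linarith [htri 1]) (hle 1 1))
      (le_of_eq (by ring))

lemma pw_zero_exp (p : ℝ) : pw p 0 = if p = 0 then 0 else 1 := by
  unfold pw
  split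
  · rfl
  · rw [Real.rpow_zero]

lemma Hren_zero_nonneg {p q : ℝ} (hp : 0 ≤ p) (hq : 0 ≤ q) (hs : p + q = 1) :
    0 ≤ Hren 0 p q := by
  rw [Hren, if_neg (by norm_num : (0:ℝ) ≠ 1), pw_zero_exp, pw_zero_exp]
  have h1 : (1:ℝ) ≤ (if p = 0 then 0 else 1) + (if q = 0 then 0 else 1) := by
    rcases eq_or_ne p 0 with h|h
    · have : q ≠ 0 := by intro hq0; rw [h, hq0] at hs; norm_num at hs
      rw [if_pos h, if_neg this]; norm_num
    · rw [if_neg h]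
      split <;> norm_num
  have := Real.log_nonneg h1
  positivity

lemma Hren_zero_two {p q : ℝ} (hp : p ≠ 0) (hq : q ≠ 0) : Hren 0 p q = Real.log 2 := by
  rw [Hren, if_neg (by norm_num : (0:ℝ) ≠ 1), pw_zero_exp, pw_zero_exp, if_neg hp, if_neg hq]
  norm_num

lemma Hren_one_zero {α : ℝ} (hα : α ≠ 1) : Hren α 1 0 = 0 := by
  rw [Hren, if_neg hα, pw, pw, if_neg one_ne_zero, if_pos rfl, Real.one_rpow]
  norm_num

lemma Hren_zero_one {α : ℝ} (hα : α ≠ 1) : Hren α 0 1 = 0 := by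
  rw [Hren, if_neg hα, pw, pw, if_neg one_ne_zero, if_pos rfl, Real.one_rpow]
  norm_num

lemma Hren_c {β c : ℝ} (hβ : β ≠ 1) :
    Hren β (c^2) (1-c^2) = (1-β)⁻¹ * Real.log (pw (c^2) β + pw (1-c^2) β) := by
  rw [Hren, if_neg hβ]

lemma Hren_c' {β c : ℝ} (hβ : β ≠ 1) :
    Hren β (1-c^2) (c^2) = (1-β)⁻¹ * Real.log (pw (c^2) β + pw (1-c^2) β) := by
  rw [Hren, if_neg hβ, add_comm (pw (1-c^2) β)]

lemma key0 (T : Matrix (Fin 2) (Fin 2) ℂ) (hT : T ∈ Matrix.unitaryGroup (Fin 2) ℂ)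
    (c : ℝ) (hc : IsGreatest {x : ℝ | ∃ k l : Fin 2, x = ‖T l k‖} c)
    (hcne : 1 - c^2 ≠ 0) (ψ : Fin 2 → ℂ)
    (hψ : ‖ψ 0‖ ^ 2 + ‖ψ 1‖ ^ 2 = 1) :
    (‖ψ 0‖ ^ 2 ≠ 0 ∧ ‖ψ 1‖ ^ 2 ≠ 0) ∨
    (‖T.mulVec ψ 0‖ ^ 2 ≠ 0 ∧ ‖T.mulVec ψ 1‖ ^ 2 ≠ 0) := by
  obtain ⟨hc0, hc1, hc2⟩ := c_facts T hT c hc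
  have hle : ∀ k l : Fin 2, ‖T l k‖ ≤ c := fun k l => hc.2 ⟨k, l, rfl⟩
  have main : ∀ i : Fin 2, ‖ψ i‖ = 0 → ‖ψ (1-i)‖ = 1 →
      ∀ j, ‖T.mulVec ψ j‖ ^ 2 ≠ 0 := by
    intro i hi hi' j hz
    have hzero : ‖T.mulVec ψ j‖ = 0 := by
      have := sq_nonneg (‖T.mulVec ψ j‖)
      nlinarith [norm_nonneg (T.mulVec ψ j)]
    have hψi : ψ i = 0 := norm_eq_zero.1 hi
    have hrj := row_norm T hT j
    have hrewrite : ‖T.mulVec ψ j‖ = ‖T j (1-i)‖ * ‖ψ (1-i)‖ := by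
      rw [mulVec_apply, ← norm_mul]
      congr 1
      fin_cases i <;> simp_all <;> ring
    rw [hrewrite, hi', mul_one] at hzero
    have h1 : ‖T j i‖ ^ 2 = 1 := by
      fin_cases i <;> fin_cases j <;> simp_all <;> nlinarith [hrj]
    have h2 : ‖T j i‖ ≤ c := hle i j
    have hlt : c^2 < 1 := by
      rcases lt_or_eq_of_le (by nlinarith : c^2 ≤ 1) with h|h
      · exact h
      · exact absurd (by linarith) hcne
    nlinarith [norm_nonneg (T j i),
      mul_self_le_mul_self (norm_nonneg (T j i)) h2]
  rcases eq_or_ne (‖ψ 0‖) 0 with h0|h0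
  · right
    have h1 : ‖ψ 1‖ = 1 := by
      have : ‖ψ 1‖ ^ 2 = 1 := by rw [h0] at hψ; nlinarith [hψ]
      nlinarith [norm_nonneg (ψ 1)]
    exact ⟨main 0 h0 (by norm_num; exact h1) 0, main 0 h0 (by norm_num; exact h1) 1⟩
  rcases eq_or_ne (‖ψ 1‖) 0 with h1|h1
  · right
    have h0' : ‖ψ 0‖ = 1 := by
      have : ‖ψ 0‖ ^ 2 = 1 := by rw [h1] at hψ; nlinarith [hψ]
      nlinarith [norm_nonneg (ψ 0)]
    exact ⟨main 1 h1 (by norm_num; exact h0') 0, main 1 h1 (by norm_num; exact h0') 1⟩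
  · exact Or.inl ⟨pow_ne_zero 2 h0, pow_ne_zero 2 h1⟩

/-- analytical tight bound for indices in the square `[0, 1/2]²`
(Corollary 1). -/
theorem stmt_3 (T : Matrix (Fin 2) (Fin 2) ℂ)
    (hT : T ∈ Matrix.unitaryGroup (Fin 2) ℂ)
    (c : ℝ)
    (hc : IsGreatest {x : ℝ | ∃ k l : Fin 2, x = ‖T l k‖} c)
    (α β : ℝ) (hα : α ∈ Set.Icc (0 : ℝ) (1 / 2)) (hβ : β ∈ Set.Icc (0 : ℝ) (1 / 2))
    (lam : ℝ) (hlam : lam = max α β) :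
    (∀ ψ : Fin 2 → ℂ, ‖ψ 0‖ ^ 2 + ‖ψ 1‖ ^ 2 = 1 →
      (1 - lam)⁻¹ * Real.log (pw (c ^ 2) lam + pw (1 - c ^ 2) lam) ≤
        Hren α (‖ψ 0‖ ^ 2) (‖ψ 1‖ ^ 2) +
          Hren β (‖T.mulVec ψ 0‖ ^ 2) (‖T.mulVec ψ 1‖ ^ 2)) ∧
    (∃ ψ : Fin 2 → ℂ, ‖ψ 0‖ ^ 2 + ‖ψ 1‖ ^ 2 = 1 ∧
      Hren α (‖ψ 0‖ ^ 2) (‖ψ 1‖ ^ 2) +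
        Hren β (‖T.mulVec ψ 0‖ ^ 2) (‖T.mulVec ψ 1‖ ^ 2) =
        (1 - lam)⁻¹ * Real.log (pw (c ^ 2) lam + pw (1 - c ^ 2) lam)) := by
  obtain ⟨hα0, hα2⟩ := hα
  obtain ⟨hβ0, hβ2⟩ := hβ
  have hαlam : α ≤ lam := by rw [hlam]; exact le_max_left _ _
  have hβlam : β ≤ lam := by rw [hlam]; exact le_max_right _ _
  have hlam0 : 0 ≤ lam := le_trans hα0 hαlam
  have hlam2 : lam ≤ 1/2 := by rw [hlam]; exact max_le hα2 hβ2
  have hαne1 : α ≠ 1 := by intro h; rw [h] at hα2; norm_num at hα2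
  have hβne1 : β ≠ 1 := by intro h; rw [h] at hβ2; norm_num at hβ2
  obtain ⟨hc0, hc1, hc2⟩ := c_facts T hT c hc
  have hcsq : c^2 ≠ 0 := by positivity
  have hc21 : c^2 ≤ 1 := by nlinarith
  constructor
  · intro ψ hψ
    have hQ := norm_pres T hT ψ hψ
    rcases eq_or_lt_of_le hlam0 with hlz|hlz
    · -- lam = 0, hence α = β = 0
      have hαz : α = 0 := le_antisymm (by linarith) hα0
      have hβz : β = 0 := le_antisymm (by linarith) hβ0
      rw [← hlz, hαz, hβz, pw_zero_exp, pw_zero_exp, if_neg hcsq]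
      rcases eq_or_ne (1 - c^2) 0 with hcc|hcc
      · rw [if_pos hcc]
        norm_num
        have g1 := Hren_zero_nonneg (sq_nonneg (‖ψ 0‖)) (sq_nonneg (‖ψ 1‖)) hψ
        have g2 := Hren_zero_nonneg (sq_nonneg (‖T.mulVec ψ 0‖))
          (sq_nonneg (‖T.mulVec ψ 1‖)) hQ
        simp only [mulVec_apply] at g1 g2 ⊢
        linarith
      · rw [if_neg hcc]
        norm_num
        rcases key0 T hT c hc hcc ψ hψ with ⟨h1, h2⟩|⟨h1, h2⟩
        · have g1 := Hren_zero_two h1 h2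
          have g2 := Hren_zero_nonneg (sq_nonneg (‖T.mulVec ψ 0‖))
            (sq_nonneg (‖T.mulVec ψ 1‖)) hQ
          simp only [mulVec_apply] at g2 ⊢
          rw [g1]
          linarith
        · have g1 := Hren_zero_two h1 h2
          have g2 := Hren_zero_nonneg (sq_nonneg (‖ψ 0‖))
            (sq_nonneg (‖ψ 1‖)) hψ
          simp only [mulVec_apply] at g1 ⊢
          rw [g1]
          linarith
    · -- 0 < lam
      have hlne : lam ≠ 0 := ne_of_gt hlz
      rw [pw_eq hlne, pw_eq hlne]
      have hp := prod_bound T hT c hc lam hlam0 hlam2 ψ hψ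
      have hh : lam ≤ (1:ℝ) := by linarith
      have hS1 : (1:ℝ) ≤ (‖ψ 0‖ ^ 2)^lam + (‖ψ 1‖ ^ 2)^lam := by
        have h := rpow_subadd (sq_nonneg (‖ψ 0‖)) (sq_nonneg (‖ψ 1‖))
          hlam0 hh
        rwa [hψ, Real.one_rpow] at h
      have hS2 : (1:ℝ) ≤ (‖T.mulVec ψ 0‖ ^ 2)^lam
          + (‖T.mulVec ψ 1‖ ^ 2)^lam := by
        have h := rpow_subadd (sq_nonneg (‖T.mulVec ψ 0‖))
          (sq_nonneg (‖T.mulVec ψ 1‖)) hlam0 hh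
        rwa [hQ, Real.one_rpow] at h
      have hC1 : (0:ℝ) < (c^2)^lam + (1-c^2)^lam := by
        have : (0:ℝ) < (c^2)^lam := Real.rpow_pos_of_pos (by positivity) lam
        have : (0:ℝ) ≤ (1-c^2)^lam := Real.rpow_nonneg (by linarith) lam
        linarith
      have hlog : Real.log ((c^2)^lam + (1-c^2)^lam)
          ≤ Real.log ((‖ψ 0‖ ^ 2)^lam + (‖ψ 1‖ ^ 2)^lam)
            + Real.log ((‖T.mulVec ψ 0‖ ^ 2)^lam
              + (‖T.mulVec ψ 1‖ ^ 2)^lam) := by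
        rw [← Real.log_mul (by linarith) (by linarith)]
        exact Real.log_le_log hC1 hp
      have hinv : (0:ℝ) ≤ (1 - lam)⁻¹ := by
        have : (0:ℝ) < 1 - lam := by linarith
        positivity
      have step := mul_le_mul_of_nonneg_left hlog hinv
      have i1 := index_mono hα0 hαlam hlam2 hlz (sq_nonneg (‖ψ 0‖))
        (sq_nonneg (‖ψ 1‖)) hψ
      have i2 := index_mono hβ0 hβlam hlam2 hlz (sq_nonneg (‖T.mulVec ψ 0‖))
        (sq_nonneg (‖T.mulVec ψ 1‖)) hQ
      calc (1 - lam)⁻¹ * Real.log ((c^2)^lam + (1-c^2)^lam)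
          ≤ (1 - lam)⁻¹ * (Real.log ((‖ψ 0‖ ^ 2)^lam + (‖ψ 1‖ ^ 2)^lam)
            + Real.log ((‖T.mulVec ψ 0‖ ^ 2)^lam
              + (‖T.mulVec ψ 1‖ ^ 2)^lam)) := step
        _ = (1 - lam)⁻¹ * Real.log ((‖ψ 0‖ ^ 2)^lam + (‖ψ 1‖ ^ 2)^lam)
            + (1 - lam)⁻¹ * Real.log ((‖T.mulVec ψ 0‖ ^ 2)^lam
              + (‖T.mulVec ψ 1‖ ^ 2)^lam) := by ring
        _ ≤ _ := add_le_add i1 i2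
  · -- tightness
    rcases le_total α β with hab|hba
    · -- lam = β : take ψ = e_k where c = |T l k|
      obtain ⟨k, l, hckl⟩ := hc.1
      have hk : k = 0 ∨ k = 1 := by fin_cases k <;> simp
      have hl : l = 0 ∨ l = 1 := by fin_cases l <;> simp
      have hlamβ : lam = β := by rw [hlam, max_eq_right hab]
      refine ⟨fun j => if j = k then (1:ℂ) else 0, ?_, ?_⟩
      · rcases hk with rfl|rfl <;> norm_num
      · have hTψ : ∀ j, T.mulVec (fun j => if j = k then (1:ℂ) else 0) j = T j k := by
          intro j
          rw [mulVec_apply]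
          rcases hk with rfl|rfl <;> norm_num
        have hcolk := col_norm T hT k
        rw [hTψ 0, hTψ 1, hlamβ]
        rcases hk with rfl|rfl <;> rcases hl with rfl|rfl <;> norm_num
        · have e1 : ‖T 0 0‖^2 = c^2 := by rw [hckl]
          have e2 : ‖T 1 0‖^2 = 1 - c^2 := by
            rw [← e1]; linarith [hcolk]
          rw [e1, e2, Hren_one_zero hαne1, Hren_c hβne1, zero_add]
        · have e1 : ‖T 1 0‖^2 = c^2 := by rw [hckl]
          have e2 : ‖T 0 0‖^2 = 1 - c^2 := by
            rw [← e1]; linarith [hcolk]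
          rw [e1, e2, Hren_one_zero hαne1, Hren_c' hβne1, zero_add]
        · have e1 : ‖T 0 1‖^2 = c^2 := by rw [hckl]
          have e2 : ‖T 1 1‖^2 = 1 - c^2 := by
            rw [← e1]; linarith [hcolk]
          rw [e1, e2, Hren_zero_one hαne1, Hren_c hβne1, zero_add]
        · have e1 : ‖T 1 1‖^2 = c^2 := by rw [hckl]
          have e2 : ‖T 0 1‖^2 = 1 - c^2 := by
            rw [← e1]; linarith [hcolk]
          rw [e1, e2, Hren_zero_one hαne1, Hren_c' hβne1, zero_add]
    · -- lam = α : take ψ = conjugate of row l of T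
      obtain ⟨k, l, hckl⟩ := hc.1
      have hk : k = 0 ∨ k = 1 := by fin_cases k <;> simp
      have hl : l = 0 ∨ l = 1 := by fin_cases l <;> simp
      have hlamα : lam = α := by rw [hlam, max_eq_left hba]
      have hrowl := row_norm T hT l
      refine ⟨fun j => (starRingEnd ℂ) (T l j), ?_, ?_⟩
      · simp only [Complex.norm_conj]
        exact hrowl
      · have hTψ : ∀ j, T.mulVec (fun j => (starRingEnd ℂ) (T l j)) j
            = if j = l then 1 else 0 := by
          intro j
          have h := congrArg (fun M => M j l) hT.2
          rw [mulVec_apply]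
          simpa [Matrix.mul_apply, Fin.sum_univ_two, Matrix.star_apply, Matrix.one_apply,
            Complex.star_def] using h
        rw [hTψ 0, hTψ 1, hlamα]
        simp only [Complex.norm_conj]
        rcases hk with rfl|rfl <;> rcases hl with rfl|rfl <;> norm_num
        · have e1 : ‖T 0 0‖^2 = c^2 := by rw [hckl]
          have e2 : ‖T 0 1‖^2 = 1 - c^2 := by
            rw [← e1]; linarith [hrowl]
          rw [e1, e2, Hren_one_zero hβne1, Hren_c hαne1, add_zero]
        · have e1 : ‖T 1 0‖^2 = c^2 := by rw [hckl]
          have e2 : ‖T 1 1‖^2 = 1 - c^2 := by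
            rw [← e1]; linarith [hrowl]
          rw [e1, e2, Hren_zero_one hβne1, Hren_c hαne1, add_zero]
        · have e1 : ‖T 0 1‖^2 = c^2 := by rw [hckl]
          have e2 : ‖T 0 0‖^2 = 1 - c^2 := by
            rw [← e1]; linarith [hrowl]
          rw [e1, e2, Hren_one_zero hβne1, Hren_c' hαne1, add_zero]
        · have e1 : ‖T 1 1‖^2 = c^2 := by rw [hckl]
          have e2 : ‖T 1 0‖^2 = 1 - c^2 := by
            rw [← e1]; linarith [hrowl]
          rw [e1, e2, Hren_zero_one hβne1, Hren_c' hαne1, add_zero]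
end

section
/- Let T be a 2×2 unitary matrix with overlap c = max_{k,l=1,2} |T_{lk}| and γ = arccos c. Then for every unit vector ψ ∈ ℂ² and all α, β ≥ 0, setting λ = max(α, β), H_α(|ψ|²) + H_β(|Tψ|²) ≥ min_{θ ∈ [0,γ]} [ H_λ((cos²θ, sin²θ)) + H_λ((cos²(γ−θ), sin²(γ−θ))) ]. -/
open Real Filter Topology

/-- `g(θ) = H_α((cos²θ, sin²θ)) + H_β((cos²(γ−θ), sin²(γ−θ)))`. -/
noncomputable def gfun (α β γ θ : ℝ) : ℝ :=
  Hren α (Real.cos θ ^ 2) (Real.sin θ ^ 2) +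
    Hren β (Real.cos (γ - θ) ^ 2) (Real.sin (γ - θ) ^ 2)

lemma Hren_comm (lam p q : ℝ) : Hren lam p q = Hren lam q p := by
  unfold Hren; rw [add_comm (pw p lam), add_comm (p * Real.log p)]

lemma pw_of_ne (lam : ℝ) {p : ℝ} (hp : p ≠ 0) : pw p lam = p ^ lam := if_neg hp

lemma Hren_one_zero' (lam : ℝ) : Hren lam 1 0 = 0 := by
  unfold Hren pw
  split
  · simp
  · norm_num

lemma Hren_nonneg {lam p q : ℝ} (hl : 0 ≤ lam) (hp : 0 ≤ p) (hq : 0 ≤ q)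
    (hpq : p + q = 1) : 0 ≤ Hren lam p q := by
  unfold Hren
  split
  · have h1 : p ≤ 1 := by linarith
    have h2 : q ≤ 1 := by linarith
    have := Real.log_nonpos hp h1
    have := Real.log_nonpos hq h2
    nlinarith [mul_nonneg hp (neg_nonneg.2 (Real.log_nonpos hp h1)),
      mul_nonneg hq (neg_nonneg.2 (Real.log_nonpos hq h2))]
  · rename_i hne
    rcases eq_or_lt_of_le hp with hp0 | hp0
    · have hq1 : q = 1 := by linarith
      simp [pw, ← hp0, hq1]
    rcases eq_or_lt_of_le hq with hq0 | hq0
    · have hp1 : p = 1 := by linarith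
      simp [pw, ← hq0, hp1]
    rw [pw_of_ne _ hp0.ne', pw_of_ne _ hq0.ne']
    rcases lt_or_gt_of_ne hne with hlt | hgt
    · have hS : (1:ℝ) ≤ p ^ lam + q ^ lam := by
        have h1 : p ≤ p ^ lam := by
          calc p = p ^ (1:ℝ) := (Real.rpow_one p).symm
          _ ≤ p ^ lam := Real.rpow_le_rpow_of_exponent_ge hp0 (by linarith) hlt.le
        have h2 : q ≤ q ^ lam := by
          calc q = q ^ (1:ℝ) := (Real.rpow_one q).symm
          _ ≤ q ^ lam := Real.rpow_le_rpow_of_exponent_ge hq0 (by linarith) hlt.le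
        linarith
      have h3 := Real.log_nonneg hS
      have h4 : (0:ℝ) ≤ (1 - lam)⁻¹ := by
        apply inv_nonneg.2; linarith
      exact mul_nonneg h4 h3
    · have hS : p ^ lam + q ^ lam ≤ 1 := by
        have h1 : p ^ lam ≤ p := by
          calc p ^ lam ≤ p ^ (1:ℝ) := Real.rpow_le_rpow_of_exponent_ge hp0 (by linarith) hgt.le
          _ = p := Real.rpow_one p
        have h2 : q ^ lam ≤ q := by
          calc q ^ lam ≤ q ^ (1:ℝ) := Real.rpow_le_rpow_of_exponent_ge hq0 (by linarith) hgt.le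
          _ = q := Real.rpow_one q
        linarith
      have hSpos : 0 < p ^ lam + q ^ lam := by positivity
      have hlog : Real.log (p ^ lam + q ^ lam) ≤ 0 := Real.log_nonpos hSpos.le hS
      have hinv : (1 - lam)⁻¹ ≤ 0 := by
        apply inv_nonpos.2; linarith
      nlinarith [mul_nonneg (neg_nonneg.2 hinv) (neg_nonneg.2 hlog)]


lemma Hren_anti_p {lam : ℝ} (hl : 0 ≤ lam) {p q : ℝ} (hp : 1/2 ≤ p) (hpq : p ≤ q)
    (hq : q ≤ 1) : Hren lam q (1 - q) ≤ Hren lam p (1 - p) := by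
  rcases eq_or_lt_of_le hq with hq1 | hq1
  · rw [hq1]
    norm_num [Hren_one_zero']
    exact Hren_nonneg hl (by linarith) (by linarith) (by ring)
  -- now q < 1
  have hp0 : (0:ℝ) < p := by linarith
  have hq0 : (0:ℝ) < q := by linarith
  by_cases h1 : lam = 1
  · -- Shannon case
    subst h1
    set f : ℝ → ℝ := fun x => Real.negMulLog x + Real.negMulLog (1 - x) with hf
    have key : ∀ x ∈ Set.Ioo (1/2 : ℝ) 1,
        HasDerivAt f (Real.log (1 - x) - Real.log x) x := by
      intro x hx
      have hx0 : x ≠ 0 := by intro h; rw [h] at hx; exact absurd hx.1 (by norm_num)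
      have hx1 : (1 - x) ≠ 0 := by intro h; have := hx.2; nlinarith [hx.2]
      have d1 := Real.hasDerivAt_negMulLog hx0
      have d2 : HasDerivAt (fun x : ℝ => Real.negMulLog (1 - x))
          ((-Real.log (1 - x) - 1) * (-1)) x := by
        have inner : HasDerivAt (fun y : ℝ => 1 - y) (-1 : ℝ) x := by
          simpa using (hasDerivAt_id' x).const_sub (1:ℝ)
        exact (Real.hasDerivAt_negMulLog hx1).comp x inner
      have := d1.add d2
      refine this.congr_deriv ?_
      ring
    have cont : ContinuousOn f (Set.Icc (1/2 : ℝ) 1) :=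
      (Real.continuous_negMulLog.add
        (Real.continuous_negMulLog.comp (continuous_const.sub continuous_id))).continuousOn
    have anti : AntitoneOn f (Set.Icc (1/2 : ℝ) 1) := by
      apply antitoneOn_of_deriv_nonpos (convex_Icc _ _) cont
      · rw [interior_Icc]
        exact fun x hx => (key x hx).differentiableAt.differentiableWithinAt
      · rw [interior_Icc]
        intro x hx
        rw [(key x hx).deriv]
        have : (0:ℝ) < x := by linarith [hx.1]
        have h2 : Real.log (1 - x) ≤ Real.log x :=
          Real.log_le_log (by linarith [hx.2]) (by linarith [hx.1])
        linarith
    have e1 : Hren 1 p (1 - p) = f p := by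
      simp [Hren, Real.negMulLog, f]; ring
    have e2 : Hren 1 q (1 - q) = f q := by
      simp [Hren, Real.negMulLog, f]; ring
    rw [e1, e2]
    exact anti ⟨hp, by linarith⟩ ⟨by linarith, by linarith⟩ hpq
  · -- Renyi case
    set f : ℝ → ℝ := fun x => (1 - lam)⁻¹ * Real.log (x ^ lam + (1 - x) ^ lam) with hf
    have hSpos : ∀ x ∈ Set.Icc (1/2:ℝ) q, (0:ℝ) < x ^ lam + (1 - x) ^ lam := by
      intro x hx
      have : (0:ℝ) < x := by linarith [hx.1]
      have : (0:ℝ) < 1 - x := by linarith [hx.2]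
      positivity
    have cont : ContinuousOn f (Set.Icc (1/2:ℝ) q) := by
      apply ContinuousOn.mul continuousOn_const
      apply ContinuousOn.log
      · apply ContinuousOn.add
        · exact fun x hx => (Real.continuousAt_rpow_const x lam
            (Or.inl (by linarith [hx.1]))).continuousWithinAt
        · exact fun x hx => ((Real.continuousAt_rpow_const (1-x) lam
            (Or.inl (by linarith [hx.2]))).comp
            (continuous_const.sub continuous_id).continuousAt).continuousWithinAt
      · exact fun x hx => (hSpos x hx).ne'
    have key : ∀ x ∈ Set.Ioo (1/2:ℝ) q,
        HasDerivAt f ((1 - lam)⁻¹ *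
          ((lam * x ^ (lam - 1) - lam * (1 - x) ^ (lam - 1)) / (x ^ lam + (1 - x) ^ lam))) x := by
      intro x hx
      have hx0 : x ≠ 0 := by have := hx.1; intro h; rw [h] at this; norm_num at this
      have hx1 : (1 - x) ≠ 0 := by have := hx.2; intro h; nlinarith
      have d1 : HasDerivAt (fun y : ℝ => y ^ lam) (lam * x ^ (lam - 1)) x :=
        Real.hasDerivAt_rpow_const (Or.inl hx0)
      have d2 : HasDerivAt (fun y : ℝ => (1 - y) ^ lam)
          ((lam * (1 - x) ^ (lam - 1)) * (-1)) x :=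
        by
          have inner : HasDerivAt (fun y : ℝ => 1 - y) (-1 : ℝ) x := by
            simpa using (hasDerivAt_id' x).const_sub (1:ℝ)
          exact (Real.hasDerivAt_rpow_const (Or.inl hx1)).comp x inner
      have dS := d1.add d2
      have dlog := (dS.log (hSpos x ⟨hx.1.le, hx.2.le⟩).ne')
      have := dlog.const_mul ((1 - lam)⁻¹)
      refine this.congr_deriv ?_
      simp only [Pi.add_apply]
      ring
    have anti : AntitoneOn f (Set.Icc (1/2:ℝ) q) := by
      apply antitoneOn_of_deriv_nonpos (convex_Icc _ _) cont
      · rw [interior_Icc]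
        exact fun x hx => (key x hx).differentiableAt.differentiableWithinAt
      · rw [interior_Icc]
        intro x hx
        rw [(key x hx).deriv]
        have hx0 : (0:ℝ) < x := by linarith [hx.1]
        have hx1 : (0:ℝ) < 1 - x := by nlinarith [hx.2]
        have hxx : 1 - x ≤ x := by linarith [hx.1]
        have hS := hSpos x ⟨hx.1.le, hx.2.le⟩
        rcases lt_trichotomy lam 1 with hlt | heq | hgt
        · -- 0 ≤ lam < 1
          have hinv : (0:ℝ) ≤ (1 - lam)⁻¹ := by apply inv_nonneg.2; linarith
          have hmono : x ^ (lam - 1) ≤ (1 - x) ^ (lam - 1) := by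
            rw [show lam - 1 = -(1 - lam) by ring, Real.rpow_neg hx0.le,
              Real.rpow_neg hx1.le]
            apply inv_anti₀
            · positivity
            · exact Real.rpow_le_rpow hx1.le hxx (by linarith)
          have hnum : lam * x ^ (lam-1) - lam * (1-x) ^ (lam-1) ≤ 0 := by nlinarith
          have hd : (lam * x ^ (lam-1) - lam * (1-x) ^ (lam-1)) / (x ^ lam + (1-x) ^ lam) ≤ 0 :=
            div_nonpos_of_nonpos_of_nonneg hnum hS.le
          exact mul_nonpos_iff.2 (Or.inl ⟨hinv, hd⟩)
        · exact absurd heq h1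
        · have hinv : (1 - lam)⁻¹ ≤ 0 := by apply inv_nonpos.2; linarith
          have hmono : (1 - x) ^ (lam - 1) ≤ x ^ (lam - 1) :=
            Real.rpow_le_rpow hx1.le hxx (by linarith)
          have hnum : 0 ≤ lam * x ^ (lam-1) - lam * (1-x) ^ (lam-1) := by nlinarith
          have : 0 ≤ (lam * x ^ (lam-1) - lam * (1-x) ^ (lam-1)) / (x ^ lam + (1-x) ^ lam) :=
            div_nonneg hnum hS.le
          exact mul_nonpos_iff.2 (Or.inr ⟨hinv, this⟩)
    have e1 : Hren lam p (1 - p) = f p := by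
      rw [Hren, if_neg h1, pw_of_ne _ hp0.ne', pw_of_ne _ (by linarith : (1:ℝ)-p ≠ 0)]
    have e2 : Hren lam q (1 - q) = f q := by
      rw [Hren, if_neg h1, pw_of_ne _ hq0.ne', pw_of_ne _ (by linarith : (1:ℝ)-q ≠ 0)]
    rw [e1, e2]
    exact anti ⟨hp, hpq⟩ ⟨by linarith, le_refl q⟩ hpq

lemma Hren_zero_one' (lam : ℝ) : Hren lam 0 1 = 0 := by
  unfold Hren pw; split <;> norm_num

lemma Hren_anti_index {p q : ℝ} (hp : 0 ≤ p) (hq : 0 ≤ q) (hpq : p + q = 1)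
    {a b : ℝ} (ha : 0 ≤ a) (hab : a ≤ b) : Hren b p q ≤ Hren a p q := by
  rcases eq_or_lt_of_le hp with hp0 | hp0
  · have hq1 : q = 1 := by linarith
    rw [← hp0, hq1, Hren_zero_one', Hren_zero_one']
  rcases eq_or_lt_of_le hq with hq0 | hq0
  · have hp1 : p = 1 := by linarith
    rw [← hq0, hp1, Hren_one_zero', Hren_one_zero']
  have hp1 : p < 1 := by linarith
  have hq1 : q < 1 := by linarith
  set G : ℝ → ℝ := fun l => Real.log (p ^ l + q ^ l) with hG
  set F : ℝ → ℝ := fun l => (1 - l)⁻¹ * G l with hF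
  have Spos : ∀ l : ℝ, (0:ℝ) < p ^ l + q ^ l := fun l => by positivity
  have dG : ∀ l : ℝ, HasDerivAt G
      ((p ^ l * Real.log p + q ^ l * Real.log q) / (p ^ l + q ^ l)) l := by
    intro l
    have d1 : HasDerivAt (fun y : ℝ => p ^ y) (p ^ l * Real.log p) l :=
      (Real.hasStrictDerivAt_const_rpow hp0 l).hasDerivAt
    have d2 : HasDerivAt (fun y : ℝ => q ^ y) (q ^ l * Real.log q) l :=
      (Real.hasStrictDerivAt_const_rpow hq0 l).hasDerivAt
    exact (d1.add d2).log (Spos l).ne'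
  have keysign : ∀ l : ℝ,
      G l + (1 - l) * ((p ^ l * Real.log p + q ^ l * Real.log q) / (p ^ l + q ^ l)) ≤ 0 := by
    intro l
    set S := p ^ l + q ^ l with hS
    have hS0 := Spos l
    have ppos : (0:ℝ) < p ^ l := by positivity
    have qpos : (0:ℝ) < q ^ l := by positivity
    have m1 : p ^ l * (Real.log S + (1 - l) * Real.log p) ≤ S * p - p ^ l := by
      have t1 : Real.log (S * p ^ (1 - l)) ≤ S * p ^ (1 - l) - 1 :=
        Real.log_le_sub_one_of_pos (by positivity)
      have e1 : Real.log (S * p ^ (1 - l)) = Real.log S + (1 - l) * Real.log p := by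
        rw [Real.log_mul hS0.ne' (by positivity), Real.log_rpow hp0]
      have e2 : p ^ l * p ^ (1 - l) = p := by
        rw [← Real.rpow_add hp0]; norm_num
      calc p ^ l * (Real.log S + (1 - l) * Real.log p)
          = p ^ l * Real.log (S * p ^ (1 - l)) := by rw [e1]
        _ ≤ p ^ l * (S * p ^ (1 - l) - 1) := by
            exact mul_le_mul_of_nonneg_left t1 ppos.le
        _ = S * (p ^ l * p ^ (1 - l)) - p ^ l := by ring
        _ = S * p - p ^ l := by rw [e2]
    have m2 : q ^ l * (Real.log S + (1 - l) * Real.log q) ≤ S * q - q ^ l := by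
      have t1 : Real.log (S * q ^ (1 - l)) ≤ S * q ^ (1 - l) - 1 :=
        Real.log_le_sub_one_of_pos (by positivity)
      have e1 : Real.log (S * q ^ (1 - l)) = Real.log S + (1 - l) * Real.log q := by
        rw [Real.log_mul hS0.ne' (by positivity), Real.log_rpow hq0]
      have e2 : q ^ l * q ^ (1 - l) = q := by
        rw [← Real.rpow_add hq0]; norm_num
      calc q ^ l * (Real.log S + (1 - l) * Real.log q)
          = q ^ l * Real.log (S * q ^ (1 - l)) := by rw [e1]
        _ ≤ q ^ l * (S * q ^ (1 - l) - 1) := by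
            exact mul_le_mul_of_nonneg_left t1 qpos.le
        _ = S * (q ^ l * q ^ (1 - l)) - q ^ l := by ring
        _ = S * q - q ^ l := by rw [e2]
    have hM : S * Real.log S + (1 - l) * (p ^ l * Real.log p + q ^ l * Real.log q) ≤ 0 := by
      have : S * Real.log S + (1 - l) * (p ^ l * Real.log p + q ^ l * Real.log q)
          = p ^ l * (Real.log S + (1 - l) * Real.log p)
            + q ^ l * (Real.log S + (1 - l) * Real.log q) := by rw [hS]; ring
      rw [this]
      have : S * p - p ^ l + (S * q - q ^ l) = 0 := by
        have : p + q = 1 := hpq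
        rw [hS]; nlinarith [this]
      linarith [m1, m2, this]
    have e3 : G l + (1 - l) * ((p ^ l * Real.log p + q ^ l * Real.log q) / S)
        = (S * Real.log S + (1 - l) * (p ^ l * Real.log p + q ^ l * Real.log q)) / S := by
      have hSne : S ≠ 0 := hS0.ne'
      rw [show G l = Real.log S from rfl]
      field_simp
    rw [e3]
    exact div_nonpos_of_nonpos_of_nonneg hM hS0.le
  have dF : ∀ l : ℝ, l ≠ 1 → HasDerivAt F
      (((1 - l) ^ 2)⁻¹ * (G l + (1 - l) *
        ((p ^ l * Real.log p + q ^ l * Real.log q) / (p ^ l + q ^ l)))) l := by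
    intro l hl
    have h1l : (1 : ℝ) - l ≠ 0 := sub_ne_zero.2 (by exact fun h => hl h.symm)
    have hi : HasDerivAt (fun y : ℝ => 1 - y) (-1) l := by
      simpa using (hasDerivAt_id' l).const_sub (1:ℝ)
    have dinv : HasDerivAt (fun y : ℝ => (1 - y)⁻¹) (((1 - l) ^ 2)⁻¹) l := by
      have := hi.inv h1l
      refine this.congr_deriv ?_
      field_simp
    have := dinv.mul (dG l)
    refine this.congr_deriv ?_
    field_simp
  have derivF_nonpos : ∀ l : ℝ, l ≠ 1 → deriv F l ≤ 0 := by
    intro l hl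
    rw [(dF l hl).deriv]
    have h2 : (0:ℝ) ≤ ((1 - l) ^ 2)⁻¹ := by positivity
    exact mul_nonpos_iff.2 (Or.inl ⟨h2, keysign l⟩)
  have antiIco : AntitoneOn F (Set.Ico (0:ℝ) 1) := by
    apply antitoneOn_of_deriv_nonpos (convex_Ico _ _)
    · exact fun l hl => ((dF l (by exact ne_of_lt hl.2)).differentiableAt).continuousAt.continuousWithinAt
    · rw [interior_Ico]
      exact fun l hl => ((dF l (ne_of_lt hl.2)).differentiableAt).differentiableWithinAt
    · rw [interior_Ico]
      exact fun l hl => derivF_nonpos l (ne_of_lt hl.2)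
  have antiIoi : AntitoneOn F (Set.Ioi (1:ℝ)) := by
    apply antitoneOn_of_deriv_nonpos (convex_Ioi _)
    · exact fun l hl => ((dF l (ne_of_gt hl)).differentiableAt).continuousAt.continuousWithinAt
    · rw [interior_Ioi]
      exact fun l hl => ((dF l (ne_of_gt hl)).differentiableAt).differentiableWithinAt
    · rw [interior_Ioi]
      exact fun l hl => derivF_nonpos l (ne_of_gt hl)
  have hFeq : ∀ l : ℝ, l ≠ 1 → Hren l p q = F l := by
    intro l hl
    rw [Hren, if_neg hl, pw_of_ne _ hp0.ne', pw_of_ne _ hq0.ne']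
  have hH1 : Hren 1 p q = -(p * Real.log p + q * Real.log q) := if_pos rfl
  have hlim : Tendsto F (𝓝[≠] (1:ℝ)) (𝓝 (Hren 1 p q)) := by
    have hG1 : G 1 = 0 := by
      simp only [hG, Real.rpow_one, hpq, Real.log_one]
    have hslope := hasDerivAt_iff_tendsto_slope.mp (dG 1)
    have heq : ∀ l : ℝ, l ≠ 1 → F l = -slope G 1 l := by
      intro l hl
      rw [slope_def_field, hG1, sub_zero, show l - 1 = -(1 - l) by ring, div_neg, neg_neg,
        div_eq_inv_mul]
    have : Tendsto (fun l => -slope G 1 l) (𝓝[≠] (1:ℝ))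
        (𝓝 (-(( p ^ (1:ℝ) * Real.log p + q ^ (1:ℝ) * Real.log q) / (p ^ (1:ℝ) + q ^ (1:ℝ))))) :=
      hslope.neg
    have hval : -((p ^ (1:ℝ) * Real.log p + q ^ (1:ℝ) * Real.log q) / (p ^ (1:ℝ) + q ^ (1:ℝ)))
        = Hren 1 p q := by
      rw [hH1]
      simp only [Real.rpow_one, hpq]
      field_simp
    rw [← hval]
    apply this.congr'
    filter_upwards [self_mem_nhdsWithin] with l hl
    exact (heq l hl).symm
  -- gluing
  have step1 : ∀ x y : ℝ, 0 ≤ x → x ≤ y → y < 1 → F y ≤ F x := by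
    intro x y hx hxy hy1
    exact antiIco ⟨hx, by linarith⟩ ⟨by linarith, hy1⟩ hxy
  have step2 : ∀ x : ℝ, 0 ≤ x → x < 1 → Hren 1 p q ≤ F x := by
    intro x hx hx1
    have hne : (𝓝[<] (1:ℝ)).NeBot := inferInstance
    have hlim' : Tendsto F (𝓝[<] (1:ℝ)) (𝓝 (Hren 1 p q)) :=
      hlim.mono_left (nhdsWithin_mono _ (fun y hy => ne_of_lt hy))
    apply le_of_tendsto hlim'
    filter_upwards [Ioo_mem_nhdsLT hx1] with l hl
    exact step1 x l hx hl.1.le hl.2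
  have step3 : ∀ y : ℝ, 1 < y → F y ≤ Hren 1 p q := by
    intro y hy
    have hlim' : Tendsto F (𝓝[>] (1:ℝ)) (𝓝 (Hren 1 p q)) :=
      hlim.mono_left (nhdsWithin_mono _ (fun z hz => ne_of_gt hz))
    apply ge_of_tendsto hlim'
    filter_upwards [Ioo_mem_nhdsGT hy] with l hl
    exact antiIoi (Set.mem_Ioi.2 hl.1) (Set.mem_Ioi.2 hy) hl.2.le
  rcases lt_trichotomy b 1 with hb1 | hb1 | hb1
  · rw [hFeq a (ne_of_lt (lt_of_le_of_lt hab hb1)), hFeq b (ne_of_lt hb1)]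
    exact step1 a b ha hab hb1
  · subst hb1
    rcases eq_or_lt_of_le hab with h | h
    · rw [h]
    · rw [hFeq a (ne_of_lt h)]
      exact step2 a ha h
  · rw [hFeq b (ne_of_gt hb1)]
    rcases lt_trichotomy a 1 with ha1 | ha1 | ha1
    · rw [hFeq a (ne_of_lt ha1)]
      exact le_trans (step3 b hb1) (step2 a ha ha1)
    · rw [ha1]
      exact step3 b hb1
    · rw [hFeq a (ne_of_gt ha1)]
      exact antiIoi (Set.mem_Ioi.2 ha1) (Set.mem_Ioi.2 (lt_of_lt_of_le ha1 hab)) hab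

lemma trig_key {u v γ : ℝ} (hu : 0 ≤ u) (hv : 0 ≤ v) (huv : u ^ 2 + v ^ 2 = 1)
    (hγ : γ = Real.arccos (max u v)) {y : ℝ} (hy0 : 0 ≤ y) (hy : y ≤ π / 4) :
    u * Real.cos y + v * Real.sin y ≤ Real.cos (γ - y) := by
  have hc0 : 0 ≤ max u v := le_trans hu (le_max_left _ _)
  have hu1 : u ≤ 1 := by nlinarith
  have hv1 : v ≤ 1 := by nlinarith
  have hc1 : max u v ≤ 1 := max_le hu1 hv1
  have hc2 : Real.sqrt 2 / 2 ≤ max u v := by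
    rcases le_total u v with h | h
    · rw [max_eq_right h]
      nlinarith [Real.sq_sqrt (show (0:ℝ) ≤ 2 by norm_num), Real.sqrt_nonneg 2]
    · rw [max_eq_left h]
      nlinarith [Real.sq_sqrt (show (0:ℝ) ≤ 2 by norm_num), Real.sqrt_nonneg 2]
  have hγ0 : 0 ≤ γ := hγ ▸ Real.arccos_nonneg _
  have hγ4 : γ ≤ π / 4 := hγ ▸ Real.arccos_le_pi_div_four.2 hc2
  have hcosγ : Real.cos γ = max u v := hγ ▸ Real.cos_arccos (by linarith) hc1
  have hsinγ0 : 0 ≤ Real.sin γ := Real.sin_nonneg_of_nonneg_of_le_pi hγ0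
    (by linarith [Real.pi_pos])
  have hsq : Real.sin γ ^ 2 = min u v ^ 2 := by
    have h1 : Real.sin γ ^ 2 = 1 - Real.cos γ ^ 2 := Real.sin_sq γ
    rcases le_total u v with h | h
    · rw [h1, hcosγ, max_eq_right h, min_eq_left h]; nlinarith
    · rw [h1, hcosγ, max_eq_left h, min_eq_right h]; nlinarith
  have hmin0 : 0 ≤ min u v := le_min hu hv
  have hsinγ : Real.sin γ = min u v := by
    nlinarith [hsq, hsinγ0, hmin0]
  rcases le_total v u with h | h
  · -- u = max = cos γ, v = min = sin γ
    rw [max_eq_left h] at hcosγ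
    rw [min_eq_right h] at hsinγ
    rw [Real.cos_sub, ← hcosγ, ← hsinγ]
  · -- v = cos γ, u = sin γ; need sin(γ+y) ≤ cos(γ−y)
    rw [max_eq_right h] at hcosγ
    rw [min_eq_left h] at hsinγ
    have hL : u * Real.cos y + v * Real.sin y = Real.sin (γ + y) := by
      rw [Real.sin_add, ← hcosγ, ← hsinγ]
    rw [hL, show Real.sin (γ + y) = Real.cos (π/2 - (γ + y)) by
      rw [Real.cos_pi_div_two_sub]]
    have hππ := Real.pi_pos
    rcases le_total y γ with hyγ | hyγ
    · apply Real.cos_le_cos_of_nonneg_of_le_pi (by linarith) (by linarith)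
      linarith
    · rw [show γ - y = -(y - γ) by ring, Real.cos_neg]
      apply Real.cos_le_cos_of_nonneg_of_le_pi (by linarith) (by linarith)
      linarith

lemma hfun_nonneg {lam : ℝ} (hl : 0 ≤ lam) (θ : ℝ) :
    0 ≤ Hren lam (Real.cos θ ^ 2) (Real.sin θ ^ 2) :=
  Hren_nonneg hl (sq_nonneg _) (sq_nonneg _) (by rw [add_comm]; exact Real.sin_sq_add_cos_sq θ)

lemma hfun_zero (lam : ℝ) : Hren lam (Real.cos 0 ^ 2) (Real.sin 0 ^ 2) = 0 := by
  rw [Real.cos_zero, Real.sin_zero, one_pow, show (0:ℝ)^2 = 0 by norm_num, Hren_one_zero']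

lemma hfun_mono {lam : ℝ} (hl : 0 ≤ lam) {θ₁ θ₂ : ℝ} (h0 : 0 ≤ θ₁) (h12 : θ₁ ≤ θ₂)
    (h4 : θ₂ ≤ π / 4) :
    Hren lam (Real.cos θ₁ ^ 2) (Real.sin θ₁ ^ 2) ≤ Hren lam (Real.cos θ₂ ^ 2) (Real.sin θ₂ ^ 2) := by
  have hpi := Real.pi_pos
  have hc21 : Real.cos θ₂ ≤ Real.cos θ₁ :=
    Real.cos_le_cos_of_nonneg_of_le_pi h0 (by linarith) h12
  have hc20 : 0 ≤ Real.cos θ₂ :=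
    Real.cos_nonneg_of_mem_Icc ⟨by linarith, by linarith⟩
  have hsq : Real.cos θ₂ ^ 2 ≤ Real.cos θ₁ ^ 2 := by nlinarith
  have hhalf : 1 / 2 ≤ Real.cos θ₂ ^ 2 := by
    have h24 : Real.cos (π / 4) ≤ Real.cos θ₂ :=
      Real.cos_le_cos_of_nonneg_of_le_pi (by linarith) (by linarith) h4
    rw [Real.cos_pi_div_four] at h24
    nlinarith [Real.sq_sqrt (show (0:ℝ) ≤ 2 by norm_num), Real.sqrt_nonneg 2]
  have hone : Real.cos θ₁ ^ 2 ≤ 1 := by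
    have := Real.sin_sq_add_cos_sq θ₁; nlinarith [sq_nonneg (Real.sin θ₁)]
  have := Hren_anti_p hl hhalf hsq hone
  rwa [Real.sin_sq θ₁, Real.sin_sq θ₂]

lemma angle_ge {x d : ℝ} (hx0 : 0 ≤ x) (hxp : x ≤ π / 2) (hdp : d ≤ π / 2)
    (h : Real.cos x ≤ Real.cos d) : d ≤ x := by
  by_contra hlt
  push_neg at hlt
  have hpi := Real.pi_pos
  have := Real.strictAntiOn_cos (Set.mem_Icc.2 ⟨hx0, by linarith⟩)
    (Set.mem_Icc.2 ⟨by linarith, by linarith⟩) hlt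
  linarith

set_option maxHeartbeats 1600000 in
/-- suboptimal bound with equal indices `λ = max(α, β)` (Corollary 3). -/
theorem stmt_5 (T : Matrix (Fin 2) (Fin 2) ℂ)
    (hT : T ∈ Matrix.unitaryGroup (Fin 2) ℂ)
    (c γ : ℝ)
    (hc : IsGreatest {x : ℝ | ∃ k l : Fin 2, x = ‖T l k‖} c)
    (hγ : γ = Real.arccos c)
    (α β : ℝ) (hα : 0 ≤ α) (hβ : 0 ≤ β)
    (lam : ℝ) (hlam : lam = max α β)
    (ψ : Fin 2 → ℂ)
    (hψ : ‖ψ 0‖ ^ 2 + ‖ψ 1‖ ^ 2 = 1) :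
    sInf ((fun θ : ℝ => gfun lam lam γ θ) '' Set.Icc 0 γ) ≤
      Hren α (‖ψ 0‖ ^ 2) (‖ψ 1‖ ^ 2) +
        Hren β (‖T.mulVec ψ 0‖ ^ 2) (‖T.mulVec ψ 1‖ ^ 2) := by
  have hpi := Real.pi_pos
  have hlam0 : 0 ≤ lam := by rw [hlam]; exact le_trans hα (le_max_left _ _)
  -- unitarity entry identities
  have hcol := Matrix.mem_unitaryGroup_iff'.mp hT
  have hrow := Matrix.mem_unitaryGroup_iff.mp hT
  have E00 : (starRingEnd ℂ) (T 0 0) * T 0 0 + (starRingEnd ℂ) (T 1 0) * T 1 0 = 1 := by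
    have := congrFun (congrFun hcol 0) 0
    simp [Matrix.mul_apply, Fin.sum_univ_two, Matrix.star_apply, Matrix.one_apply] at this
    linear_combination this
  have E11 : (starRingEnd ℂ) (T 0 1) * T 0 1 + (starRingEnd ℂ) (T 1 1) * T 1 1 = 1 := by
    have := congrFun (congrFun hcol 1) 1
    simp [Matrix.mul_apply, Fin.sum_univ_two, Matrix.star_apply, Matrix.one_apply] at this
    linear_combination this
  have E01 : (starRingEnd ℂ) (T 0 0) * T 0 1 + (starRingEnd ℂ) (T 1 0) * T 1 1 = 0 := by
    have := congrFun (congrFun hcol 0) 1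
    simp [Matrix.mul_apply, Fin.sum_univ_two, Matrix.star_apply, Matrix.one_apply] at this
    linear_combination this
  have E10 : (starRingEnd ℂ) (T 0 1) * T 0 0 + (starRingEnd ℂ) (T 1 1) * T 1 0 = 0 := by
    have := congrFun (congrFun hcol 1) 0
    simp [Matrix.mul_apply, Fin.sum_univ_two, Matrix.star_apply, Matrix.one_apply] at this
    linear_combination this
  have F00 : T 0 0 * (starRingEnd ℂ) (T 0 0) + T 0 1 * (starRingEnd ℂ) (T 0 1) = 1 := by
    have := congrFun (congrFun hrow 0) 0
    simp [Matrix.mul_apply, Fin.sum_univ_two, Matrix.star_apply, Matrix.one_apply] at this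
    linear_combination this
  have habs : ∀ z : ℂ, z * (starRingEnd ℂ) z = (‖z‖ ^ 2 : ℝ) := by
    intro z; rw [Complex.mul_conj, Complex.sq_norm]
  have toReal : ∀ z w : ℂ, ∀ r : ℝ, z * (starRingEnd ℂ) z + w * (starRingEnd ℂ) w = (r:ℂ) →
      ‖z‖ ^ 2 + ‖w‖ ^ 2 = r := by
    intro z w r h
    rw [habs, habs] at h
    exact_mod_cast h
  have col0 : ‖T 0 0‖ ^ 2 + ‖T 1 0‖ ^ 2 = 1 := by
    apply toReal; push_cast; linear_combination E00
  have col1 : ‖T 0 1‖ ^ 2 + ‖T 1 1‖ ^ 2 = 1 := by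
    apply toReal; push_cast; linear_combination E11
  have row0 : ‖T 0 0‖ ^ 2 + ‖T 0 1‖ ^ 2 = 1 := by
    apply toReal; push_cast; linear_combination F00
  set A := T.mulVec ψ with hA
  have hA0 : A 0 = T 0 0 * ψ 0 + T 0 1 * ψ 1 := by
    simp [hA, Matrix.mulVec, dotProduct, Fin.sum_univ_two]
  have hA1 : A 1 = T 1 0 * ψ 0 + T 1 1 * ψ 1 := by
    simp [hA, Matrix.mulVec, dotProduct, Fin.sum_univ_two]
  have hnorm : ‖A 0‖ ^ 2 + ‖A 1‖ ^ 2 = 1 := by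
    apply toReal
    rw [hA0, hA1]
    have hr : (ψ 0 * (starRingEnd ℂ) (ψ 0) + ψ 1 * (starRingEnd ℂ) (ψ 1) : ℂ) = ((1:ℝ):ℂ) := by
      rw [habs, habs, ← Complex.ofReal_add, hψ]
    rw [← hr]
    simp only [map_add, map_mul]
    linear_combination (ψ 0 * (starRingEnd ℂ) (ψ 0)) * E00
      + (ψ 0 * (starRingEnd ℂ) (ψ 1)) * E10
      + (ψ 1 * (starRingEnd ℂ) (ψ 0)) * E01
      + (ψ 1 * (starRingEnd ℂ) (ψ 1)) * E11
  have hback : (star T).mulVec A = ψ := by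
    rw [hA, Matrix.mulVec_mulVec, hcol, Matrix.one_mulVec]
  have hψ1' : ψ 1 = (starRingEnd ℂ) (T 0 1) * A 0 + (starRingEnd ℂ) (T 1 1) * A 1 := by
    have := congrFun hback 1
    simpa [Matrix.mulVec, dotProduct, Fin.sum_univ_two, Matrix.star_apply,
      Complex.star_def] using this.symm
  have tri : ∀ x y p q : ℂ, ‖x * p + y * q‖
      ≤ ‖x‖ * ‖p‖ + ‖y‖ * ‖q‖ := by
    intro x y p q
    calc ‖x * p + y * q‖ ≤ ‖x * p‖ + ‖y * q‖ :=
        norm_add_le _ _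
      _ = _ := by rw [norm_mul, norm_mul]
  -- entry magnitudes
  set u := ‖T 0 0‖ with hu
  set v := ‖T 0 1‖ with hv
  have hu0 : 0 ≤ u := norm_nonneg _
  have hv0 : 0 ≤ v := norm_nonneg _
  have huv : u ^ 2 + v ^ 2 = 1 := row0
  have habsT10 : ‖T 1 0‖ = v := by
    have hsq : ‖T 1 0‖ ^ 2 = v ^ 2 := by linarith [col0, row0]
    rw [← Real.sqrt_sq (norm_nonneg (T 1 0)), hsq, Real.sqrt_sq hv0]
  have habsT11 : ‖T 1 1‖ = u := by
    have hsq : ‖T 1 1‖ ^ 2 = u ^ 2 := by linarith [col1, row0]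
    rw [← Real.sqrt_sq (norm_nonneg (T 1 1)), hsq, Real.sqrt_sq hu0]
  -- c = max u v
  have hcmax : c = max u v := by
    obtain ⟨⟨k, l, hkl⟩, hub⟩ := hc
    have h1 : u ≤ c := hub ⟨0, 0, rfl⟩
    have h2 : v ≤ c := hub ⟨1, 0, rfl⟩
    have h3 : c ≤ max u v := by
      rw [hkl]
      fin_cases l <;> fin_cases k <;>
        simp [habsT10, habsT11, le_max_left, le_max_right, hu, hv]
    exact le_antisymm h3 (max_le h1 h2)
  have hγc : γ = Real.arccos (max u v) := by rw [hγ, hcmax]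
  have hγc' : γ = Real.arccos (max v u) := by rw [max_comm]; exact hγc
  have hvu : v ^ 2 + u ^ 2 = 1 := by linarith
  have hγ0 : 0 ≤ γ := hγ ▸ Real.arccos_nonneg c
  have hγ4 : γ ≤ π / 4 := by
    rw [hγc]
    apply Real.arccos_le_pi_div_four.2
    rcases le_total u v with h | h
    · rw [max_eq_right h]
      nlinarith [Real.sq_sqrt (show (0:ℝ) ≤ 2 by norm_num), Real.sqrt_nonneg 2]
    · rw [max_eq_left h]
      nlinarith [Real.sq_sqrt (show (0:ℝ) ≤ 2 by norm_num), Real.sqrt_nonneg 2]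
  -- amplitudes and angles
  set a := ‖ψ 0‖ with ha
  set sa := ‖ψ 1‖ with hsa
  set b := ‖A 0‖ with hb
  set sb := ‖A 1‖ with hsb
  have ha0 : 0 ≤ a := norm_nonneg _
  have hsa0 : 0 ≤ sa := norm_nonneg _
  have hb0 : 0 ≤ b := norm_nonneg _
  have hsb0 : 0 ≤ sb := norm_nonneg _
  have ha1 : a ≤ 1 := by
    rw [← Real.sqrt_sq ha0, ← Real.sqrt_one]
    exact Real.sqrt_le_sqrt (by nlinarith [sq_nonneg sa, hψ])
  have hb1 : b ≤ 1 := by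
    rw [← Real.sqrt_sq hb0, ← Real.sqrt_one]
    exact Real.sqrt_le_sqrt (by nlinarith [sq_nonneg sb, hnorm])
  set θ₁ := Real.arccos a with hθ₁
  set θ₂ := Real.arccos b with hθ₂
  have hθ₁0 : 0 ≤ θ₁ := Real.arccos_nonneg a
  have hθ₂0 : 0 ≤ θ₂ := Real.arccos_nonneg b
  have hθ₁p : θ₁ ≤ π / 2 := Real.arccos_le_pi_div_two.2 ha0
  have hθ₂p : θ₂ ≤ π / 2 := Real.arccos_le_pi_div_two.2 hb0
  have hcos1 : Real.cos θ₁ = a := Real.cos_arccos (by linarith) ha1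
  have hcos2 : Real.cos θ₂ = b := Real.cos_arccos (by linarith) hb1
  have hsin1 : Real.sin θ₁ = sa := by
    rw [hθ₁, Real.sin_arccos, show 1 - a ^ 2 = sa ^ 2 by linarith [hψ], Real.sqrt_sq hsa0]
  have hsin2 : Real.sin θ₂ = sb := by
    rw [hθ₂, Real.sin_arccos, show 1 - b ^ 2 = sb ^ 2 by linarith [hnorm], Real.sqrt_sq hsb0]
  -- raw triangle bounds
  have R1 : b ≤ u * a + v * sa := by rw [hb, hA0]; exact tri _ _ _ _
  have R2 : sb ≤ v * a + u * sa := by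
    rw [hsb, hA1]
    calc ‖T 1 0 * ψ 0 + T 1 1 * ψ 1‖
        ≤ ‖T 1 0‖ * a + ‖T 1 1‖ * sa := tri _ _ _ _
      _ = v * a + u * sa := by rw [habsT10, habsT11]
  have R4 : sa ≤ v * b + u * sb := by
    rw [hsa, hψ1']
    calc ‖(starRingEnd ℂ) (T 0 1) * A 0 + (starRingEnd ℂ) (T 1 1) * A 1‖
        ≤ ‖(starRingEnd ℂ) (T 0 1)‖ * b + ‖(starRingEnd ℂ) (T 1 1)‖ * sb :=
          tri _ _ _ _
      _ = v * b + u * sb := by rw [Complex.norm_conj, Complex.norm_conj, habsT11]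
  -- index monotonicity
  have mα : Hren lam (a ^ 2) (sa ^ 2) ≤ Hren α (a ^ 2) (sa ^ 2) :=
    Hren_anti_index (sq_nonneg a) (sq_nonneg sa) hψ hα (hlam ▸ le_max_left α β)
  have mβ : Hren lam (b ^ 2) (sb ^ 2) ≤ Hren β (b ^ 2) (sb ^ 2) :=
    Hren_anti_index (sq_nonneg b) (sq_nonneg sb) hnorm hβ (hlam ▸ le_max_right α β)
  -- infimum bound helper
  have Sle : ∀ θ : ℝ, 0 ≤ θ → θ ≤ γ →
      sInf ((fun θ : ℝ => gfun lam lam γ θ) '' Set.Icc 0 γ) ≤ gfun lam lam γ θ := by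
    intro θ h1 h2
    apply csInf_le
    · refine ⟨0, ?_⟩
      rintro x ⟨t, _, rfl⟩
      exact add_nonneg (hfun_nonneg hlam0 t) (hfun_nonneg hlam0 (γ - t))
    · exact ⟨θ, ⟨h1, h2⟩, rfl⟩
  have hγval : gfun lam lam γ γ = Hren lam (Real.cos γ ^ 2) (Real.sin γ ^ 2) := by
    unfold gfun
    rw [sub_self, hfun_zero, add_zero]
  have final : ∀ x₁ x₂ : ℝ, 0 ≤ x₁ → x₁ ≤ π / 4 → 0 ≤ x₂ → x₂ ≤ π / 4 → γ ≤ x₁ + x₂ →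
      sInf ((fun θ : ℝ => gfun lam lam γ θ) '' Set.Icc 0 γ) ≤
        Hren lam (Real.cos x₁ ^ 2) (Real.sin x₁ ^ 2) +
          Hren lam (Real.cos x₂ ^ 2) (Real.sin x₂ ^ 2) := by
    intro x₁ x₂ h10 h14 h20 h24 hsum
    by_cases hc1 : γ ≤ x₁
    · calc sInf ((fun θ : ℝ => gfun lam lam γ θ) '' Set.Icc 0 γ) ≤ gfun lam lam γ γ :=
          Sle γ hγ0 le_rfl
        _ = Hren lam (Real.cos γ ^ 2) (Real.sin γ ^ 2) := hγval
        _ ≤ Hren lam (Real.cos x₁ ^ 2) (Real.sin x₁ ^ 2) := hfun_mono hlam0 hγ0 hc1 h14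
        _ ≤ _ := le_add_of_nonneg_right (hfun_nonneg hlam0 x₂)
    by_cases hc2 : γ ≤ x₂
    · calc sInf ((fun θ : ℝ => gfun lam lam γ θ) '' Set.Icc 0 γ) ≤ gfun lam lam γ γ :=
          Sle γ hγ0 le_rfl
        _ = Hren lam (Real.cos γ ^ 2) (Real.sin γ ^ 2) := hγval
        _ ≤ Hren lam (Real.cos x₂ ^ 2) (Real.sin x₂ ^ 2) := hfun_mono hlam0 hγ0 hc2 h24
        _ ≤ _ := le_add_of_nonneg_left (hfun_nonneg hlam0 x₁)
    push_neg at hc1 hc2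
    calc sInf ((fun θ : ℝ => gfun lam lam γ θ) '' Set.Icc 0 γ) ≤ gfun lam lam γ x₁ :=
        Sle x₁ h10 hc1.le
      _ = Hren lam (Real.cos x₁ ^ 2) (Real.sin x₁ ^ 2) +
          Hren lam (Real.cos (γ - x₁) ^ 2) (Real.sin (γ - x₁) ^ 2) := rfl
      _ ≤ _ := by
          apply add_le_add_right
          exact hfun_mono hlam0 (by linarith) (by linarith) h24
  -- geometric case analysis
  have main2 : sInf ((fun θ : ℝ => gfun lam lam γ θ) '' Set.Icc 0 γ) ≤
      Hren lam (a ^ 2) (sa ^ 2) + Hren lam (b ^ 2) (sb ^ 2) := by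
    rcases le_or_gt θ₁ (π / 4) with h1 | h1
    · rcases le_or_gt θ₂ (π / 4) with h2 | h2
      · -- both small
        have hcc : Real.cos θ₂ ≤ Real.cos (γ - θ₁) := by
          rw [hcos2]
          calc b ≤ u * a + v * sa := R1
            _ = u * Real.cos θ₁ + v * Real.sin θ₁ := by rw [hcos1, hsin1]
            _ ≤ Real.cos (γ - θ₁) := trig_key hu0 hv0 huv hγc hθ₁0 h1
        have hconstr : γ - θ₁ ≤ θ₂ := angle_ge hθ₂0 hθ₂p (by linarith) hcc
        have := final θ₁ θ₂ hθ₁0 h1 hθ₂0 h2 (by linarith)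
        rwa [hcos1, hsin1, hcos2, hsin2] at this
      · -- θ₂ large: use x₂ = π/2 - θ₂
        have hcc : Real.cos (π / 2 - θ₂) ≤ Real.cos (γ - θ₁) := by
          rw [Real.cos_pi_div_two_sub, hsin2]
          calc sb ≤ v * a + u * sa := R2
            _ = v * Real.cos θ₁ + u * Real.sin θ₁ := by rw [hcos1, hsin1]
            _ ≤ Real.cos (γ - θ₁) := trig_key hv0 hu0 hvu hγc' hθ₁0 h1
        have hconstr : γ - θ₁ ≤ π / 2 - θ₂ := angle_ge (by linarith) (by linarith)
          (by linarith) hcc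
        have := final θ₁ (π / 2 - θ₂) hθ₁0 h1 (by linarith) (by linarith) (by linarith)
        rw [hcos1, hsin1, Real.cos_pi_div_two_sub, Real.sin_pi_div_two_sub,
          hcos2, hsin2, Hren_comm lam (sb ^ 2) (b ^ 2)] at this
        exact this
    · rcases le_or_gt θ₂ (π / 4) with h2 | h2
      · -- θ₁ large: use x₁ = π/2 - θ₁, constraint via R4
        have hcc : Real.cos (π / 2 - θ₁) ≤ Real.cos (γ - θ₂) := by
          rw [Real.cos_pi_div_two_sub, hsin1]
          calc sa ≤ v * b + u * sb := R4
            _ = v * Real.cos θ₂ + u * Real.sin θ₂ := by rw [hcos2, hsin2]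
            _ ≤ Real.cos (γ - θ₂) := trig_key hv0 hu0 hvu hγc' hθ₂0 h2
        have hconstr : γ - θ₂ ≤ π / 2 - θ₁ := angle_ge (by linarith) (by linarith)
          (by linarith) hcc
        have := final (π / 2 - θ₁) θ₂ (by linarith) (by linarith) hθ₂0 h2 (by linarith)
        rw [Real.cos_pi_div_two_sub, Real.sin_pi_div_two_sub, hcos1, hsin1,
          hcos2, hsin2, Hren_comm lam (sa ^ 2) (a ^ 2)] at this
        exact this
      · -- both large: x₁ = π/2 - θ₁, x₂ = π/2 - θ₂, constraint via R2
        have hx10 : (0:ℝ) ≤ π / 2 - θ₁ := by linarith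
        have hx14 : π / 2 - θ₁ ≤ π / 4 := by linarith
        have hcc : Real.cos (π / 2 - θ₂) ≤ Real.cos (γ - (π / 2 - θ₁)) := by
          rw [Real.cos_pi_div_two_sub, hsin2]
          calc sb ≤ v * a + u * sa := R2
            _ = u * Real.cos (π / 2 - θ₁) + v * Real.sin (π / 2 - θ₁) := by
                rw [Real.cos_pi_div_two_sub, Real.sin_pi_div_two_sub, hcos1, hsin1]; ring
            _ ≤ Real.cos (γ - (π / 2 - θ₁)) := trig_key hu0 hv0 huv hγc hx10 hx14
        have hconstr : γ - (π / 2 - θ₁) ≤ π / 2 - θ₂ := angle_ge (by linarith) (by linarith)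
          (by linarith) hcc
        have := final (π / 2 - θ₁) (π / 2 - θ₂) hx10 hx14 (by linarith) (by linarith)
          (by linarith)
        rw [Real.cos_pi_div_two_sub, Real.sin_pi_div_two_sub, hcos1, hsin1] at this
        rw [Real.cos_pi_div_two_sub, Real.sin_pi_div_two_sub, hcos2, hsin2] at this
        rw [Hren_comm lam (sa ^ 2) (a ^ 2), Hren_comm lam (sb ^ 2) (b ^ 2)] at this
        exact this
  calc sInf ((fun θ : ℝ => gfun lam lam γ θ) '' Set.Icc 0 γ) ≤
      Hren lam (a ^ 2) (sa ^ 2) + Hren lam (b ^ 2) (sb ^ 2) := main2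
    _ ≤ Hren α (a ^ 2) (sa ^ 2) + Hren β (b ^ 2) (sb ^ 2) := add_le_add mα mβ
end
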